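/- For even n ≥ 4, the number of binary necklaces of length n with an even number of 1's is strictly greater than the number of binary necklaces of length n with an odd number of 1's; moreover their difference is strictly greater than 1. -/

import Mathlib

/-- Two binary strings of length `n` are rotation-equivalent. -/
def necklaceRel (n : ℕ) (f g : Fin n → Bool) : Prop :=
  ∃ k : ℕ, g = f ∘ ⇑((finRotate n) ^ k)

/-- Number of ones in a binary string. -/
def onesCount {n : ℕ} (f : Fin n → Bool) : ℕ :=
  (Finset.univ.filter (fun i => f i = true)).card

/-- Rotation relation restricted to strings with an even number of ones. -/
def necklaceRelEven (n : ℕ) (f g : {f : Fin n → Bool // Even (onesCount f)}) : Prop :=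
  necklaceRel n f.1 g.1

/-- Rotation relation restricted to strings with an odd number of ones. -/
def necklaceRelOdd (n : ℕ) (f g : {f : Fin n → Bool // Odd (onesCount f)}) : Prop :=
  necklaceRel n f.1 g.1

open Fin.NatCast

namespace NecklaceAux

variable {n : ℕ}

lemma npos [NeZero n] : 0 < n := Nat.pos_of_ne_zero (NeZero.ne n)

lemma finRotate_pow_apply [NeZero n] (k : ℕ) (i : Fin n) :
    ((finRotate n) ^ k) i = i + (k : Fin n) := by
  obtain ⟨m, rfl⟩ := Nat.exists_eq_succ_of_ne_zero (NeZero.ne n)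
  induction k generalizing i with
  | zero => simp
  | succ k ih =>
      rw [pow_succ, Equiv.Perm.mul_apply, finRotate_succ_apply, ih]
      push_cast
      abel

/-- `f` is invariant under rotation by `c`. -/
def Per (c : Fin n) (f : Fin n → Bool) : Prop := ∀ i, f (i + c) = f i

instance (c : Fin n) : DecidablePred (Per c) := fun f => by unfold Per; infer_instance

lemma Per.nsmul [NeZero n] {c : Fin n} {f : Fin n → Bool} (h : Per c f) (t : ℕ) :
    Per (t • c) f := by
  induction t with
  | zero => intro i; simp
  | succ t ih =>
      intro i
      rw [succ_nsmul, ← add_assoc]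
      exact (h _).trans (ih i)

lemma onesCount_comp_add [NeZero n] (f : Fin n → Bool) (c : Fin n) :
    onesCount (fun i => f (i + c)) = onesCount f := by
  unfold onesCount
  apply Finset.card_nbij' (fun i => i + c) (fun j => j - c) <;>
    simp [sub_add_cancel, Set.MapsTo, Set.LeftInvOn, Set.RightInvOn]

lemma nsmul_val [NeZero n] (t : ℕ) (c : Fin n) : (t • c).val = (t * c.val) % n := by
  induction t with
  | zero => simp [Nat.zero_mod]
  | succ t ih =>
      rw [succ_nsmul, Fin.val_add, ih, Nat.succ_mul, Nat.add_mod, Nat.mod_mod_of_dvd]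
      · simp [Nat.add_mod]
      · exact dvd_rfl

lemma exists_nsmul_eq_gcd [NeZero n] (c : Fin n) :
    ∃ t : ℕ, t • c = ((Nat.gcd c.val n : ℕ) : Fin n) := by
  have hn0 : (0:ℤ) < (n:ℤ) := by exact_mod_cast npos
  obtain ⟨a, b, hab⟩ : ∃ a b : ℤ, (Nat.gcd c.val n : ℤ) = c.val * a + n * b :=
    ⟨Nat.gcdA c.val n, Nat.gcdB c.val n, Nat.gcd_eq_gcd_ab c.val n⟩
  refine ⟨(a % n).toNat, ?_⟩
  apply Fin.ext
  rw [nsmul_val, Fin.val_natCast]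
  have h1 : ((a % n).toNat : ℤ) = a % n := Int.toNat_of_nonneg (Int.emod_nonneg a (by omega))
  have : (((a % n).toNat * c.val : ℕ) : ℤ) % n = ((Nat.gcd c.val n : ℤ)) % n := by
    push_cast
    rw [h1]
    conv_rhs => rw [hab]
    rw [Int.add_mul_emod_self_left, Int.mul_emod, Int.emod_emod_of_dvd _ dvd_rfl, ← Int.mul_emod]
    ring_nf
  have := congrArg Int.toNat this
  rw [← Int.natCast_mod, ← Int.natCast_mod, Int.toNat_natCast, Int.toNat_natCast] at this
  exact this

lemma Per.gcd [NeZero n] {c : Fin n} {f : Fin n → Bool} (h : Per c f) :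
    Per ((Nat.gcd c.val n : ℕ) : Fin n) f := by
  obtain ⟨t, ht⟩ := exists_nsmul_eq_gcd c
  simpa [ht] using h.nsmul t

lemma sum_range_mul_mod (h : ℕ → ℕ) (d q : ℕ) :
    ∑ j ∈ Finset.range (q * d), h (j % d) = q * ∑ r ∈ Finset.range d, h (r % d) := by
  induction q with
  | zero => simp
  | succ q ih =>
      have hdisj : Disjoint (Finset.range (q * d))
          (Finset.map (addLeftEmbedding (q * d)) (Finset.range d)) := by
        rw [Finset.disjoint_left]
        intro x hx hy
        simp only [Finset.mem_range, Finset.mem_map, addLeftEmbedding] at hx hy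
        obtain ⟨j, hj, rfl⟩ := hy
        simp only [Function.Embedding.coeFn_mk] at hx
        omega
      rw [Nat.succ_mul, Finset.range_add, Finset.sum_union hdisj, ih, Finset.sum_map]
      have : ∀ j ∈ Finset.range d, h ((addLeftEmbedding (q*d)) j % d) = h (j % d) := by
        intro j _
        have : (addLeftEmbedding (q*d)) j = q*d + j := rfl
        rw [this]
        congr 1
        simp [Nat.add_mod, Nat.mul_mod_left]
      rw [Finset.sum_congr rfl this]
      ring

lemma Per.val_mod [NeZero n] {d : ℕ} {f : Fin n → Bool} (hper : Per ((d : ℕ) : Fin n) f)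
    (hd : d ∣ n) (hd0 : 0 < d) :
    ∀ i : Fin n, f i = f ((i.val % d : ℕ) : Fin n) := by
  intro i
  have h2 := hper.nsmul (i.val / d)
  have hval : ((i.val % d : ℕ) : Fin n) + (i.val / d) • ((d : ℕ) : Fin n) = i := by
    apply Fin.ext
    rw [Fin.val_add, nsmul_val, Fin.val_natCast, Fin.val_natCast]
    have heq : (i.val % d % n + (i.val / d * (d % n)) % n) ≡ (i.val % d + i.val / d * d) [MOD n] :=
      Nat.ModEq.add (Nat.mod_modEq _ n)
        (((Nat.mod_modEq _ n)).trans (Nat.ModEq.mul_left _ (Nat.mod_modEq d n)))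
    calc (i.val % d % n + i.val / d * (d % n) % n) % n
        = (i.val % d + i.val / d * d) % n := heq
      _ = i.val % n := by rw [Nat.mod_add_div']
      _ = i.val := Nat.mod_eq_of_lt i.isLt
  calc f i = f (((i.val % d : ℕ) : Fin n) + (i.val / d) • ((d : ℕ) : Fin n)) := by rw [hval]
    _ = f ((i.val % d : ℕ) : Fin n) := h2 _

lemma onesCount_of_periodic [NeZero n] {d : ℕ} {f : Fin n → Bool}
    (hmod : ∀ i : Fin n, f i = f ((i.val % d : ℕ) : Fin n)) (hd : d ∣ n) (hd0 : 0 < d) :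
    onesCount f = (n / d) * ((Finset.range d).filter (fun r => f ((r : ℕ) : Fin n) = true)).card := by
  unfold onesCount
  rw [Finset.card_filter]
  set H : ℕ → ℕ := fun j => if f ((j % d : ℕ) : Fin n) = true then 1 else 0 with hH
  have key : ∀ i : Fin n, (if f i = true then 1 else 0) = H i.val := by
    intro i
    rw [hH]
    simp only
    rw [← hmod i]
  rw [Finset.sum_congr rfl (fun i _ => key i)]
  rw [Fin.sum_univ_eq_sum_range H n]
  have hn : n = (n / d) * d := (Nat.div_mul_cancel hd).symm
  have h2 : ∑ i ∈ Finset.range n, H i = ∑ i ∈ Finset.range ((n/d)*d), H i := by rw [← hn]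
  have h3 : ∀ j, H j = H (j % d) := by
    intro j
    rw [hH]
    simp only [Nat.mod_mod_of_dvd _ (dvd_refl d)]
  calc ∑ i ∈ Finset.range n, H i = ∑ i ∈ Finset.range ((n/d)*d), H (i % d) := by
        rw [h2]; exact Finset.sum_congr rfl (fun j _ => h3 j)
    _ = (n/d) * ∑ r ∈ Finset.range d, H (r % d) := sum_range_mul_mod H d (n/d)
    _ = (n/d) * ∑ r ∈ Finset.range d, H r := by
        rw [Finset.sum_congr rfl (fun j (hj : j ∈ Finset.range d) => (h3 j).symm)]
    _ = (n / d) * ((Finset.range d).filter (fun r => f ((r : ℕ) : Fin n) = true)).card := by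
        have hcong : ∀ r ∈ Finset.range d, H r = if f ((r:ℕ):Fin n) = true then 1 else 0 := by
          intro r hr
          rw [hH]
          simp only [Nat.mod_eq_of_lt (Finset.mem_range.mp hr)]
        rw [Finset.sum_congr rfl hcong, Finset.card_filter]

/-- Flip the bits at positions divisible by `g`. -/
def flip (g : ℕ) (f : Fin n → Bool) : Fin n → Bool :=
  fun i => xor (decide (i.val % g = 0)) (f i)

lemma flip_flip (g : ℕ) (f : Fin n → Bool) : flip g (flip g f) = f := by
  funext i
  unfold flip
  cases h : decide (i.val % g = 0) <;> simp [h]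

lemma flip_per [NeZero n] {c : Fin n} {f : Fin n → Bool} (h : Per c f) :
    Per c (flip (Nat.gcd c.val n) f) := by
  intro i
  unfold flip
  rw [h i]
  have h1 : (i + c).val % (Nat.gcd c.val n) = i.val % (Nat.gcd c.val n) := by
    rw [Fin.val_add, Nat.mod_mod_of_dvd _ (Nat.gcd_dvd_right c.val n)]
    set g := Nat.gcd c.val n with hg
    obtain ⟨t, ht⟩ : g ∣ c.val := Nat.gcd_dvd_left c.val n
    rw [ht, Nat.add_mul_mod_self_left]
  rw [h1]

lemma card_residue_zero [NeZero n] {g : ℕ} (hg : g ∣ n) (hg0 : 0 < g) :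
    (Finset.univ.filter (fun i : Fin n => i.val % g = 0)).card = n / g := by
  rw [← Finset.card_range (n / g)]
  apply Finset.card_nbij' (fun i => i.val / g) (fun r => ((r * g : ℕ) : Fin n))
  · intro i hi
    simp only [Finset.coe_filter, Set.mem_setOf_eq, Finset.mem_filter, Finset.mem_univ, true_and] at hi
    simp only [Finset.coe_range, Set.mem_Iio, Finset.mem_range]
    exact Nat.div_lt_div_of_lt_of_dvd hg i.isLt
  · intro r hr
    simp only [Finset.coe_range, Set.mem_Iio, Finset.mem_range] at hr
    simp only [Finset.coe_filter, Set.mem_setOf_eq, Finset.mem_filter, Finset.mem_univ, true_and, Fin.val_natCast]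
    rw [Nat.mod_mod_of_dvd _ hg, Nat.mul_mod_left]
  · intro i hi
    simp only [Finset.coe_filter, Set.mem_setOf_eq, Finset.mem_filter, Finset.mem_univ, true_and] at hi
    apply Fin.ext
    rw [Fin.val_natCast, Nat.div_mul_cancel (Nat.dvd_of_mod_eq_zero hi)]
    exact Nat.mod_eq_of_lt i.isLt
  · intro r hr
    simp only [Finset.coe_range, Set.mem_Iio, Finset.mem_range] at hr
    have h1 : r * g < n := by
      calc r * g < (n/g) * g := by
            exact (Nat.mul_lt_mul_right hg0).mpr hr
        _ ≤ n := Nat.div_mul_le_self n g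
    dsimp only
    rw [Fin.val_natCast, Nat.mod_eq_of_lt h1, Nat.mul_div_cancel _ hg0]

lemma onesCount_flip_parity [NeZero n] {g : ℕ} (hg : g ∣ n) (hg0 : 0 < g)
    (f : Fin n → Bool) :
    onesCount (flip g f) + 2 * ((Finset.univ.filter (fun i => f i = true)) ∩
      (Finset.univ.filter (fun i : Fin n => i.val % g = 0))).card
      = onesCount f + n / g := by
  classical
  set s := Finset.univ.filter (fun i => f i = true) with hs
  set c0 := Finset.univ.filter (fun i : Fin n => i.val % g = 0) with hc0
  have hset : Finset.univ.filter (fun i => flip g f i = true) = (s ∪ c0) \ (s ∩ c0) := by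
    ext i
    by_cases h1 : f i = true <;> by_cases h2 : i.val % g = 0 <;>
      simp [flip, hs, hc0, h1, h2]
  have h3 : (s ∩ c0) ⊆ (s ∪ c0) := (Finset.inter_subset_left).trans Finset.subset_union_left
  have h4 : ((s ∪ c0) \ (s ∩ c0)).card + (s ∩ c0).card = (s ∪ c0).card :=
    Finset.card_sdiff_add_card_eq_card h3
  have h5 : (s ∪ c0).card + (s ∩ c0).card = s.card + c0.card :=
    Finset.card_union_add_card_inter s c0
  have h6 : c0.card = n / g := card_residue_zero hg hg0
  unfold onesCount
  rw [hset, ← hs]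
  omega

/-- even-weight strings fixed by rotation `c` -/
abbrev EF (c : Fin n) := {f : Fin n → Bool // Even (onesCount f) ∧ Per c f}
/-- odd-weight strings fixed by rotation `c` -/
abbrev OF (c : Fin n) := {f : Fin n → Bool // Odd (onesCount f) ∧ Per c f}

lemma gcd_pos [NeZero n] (c : Fin n) : 0 < Nat.gcd c.val n :=
  Nat.gcd_pos_of_pos_right _ npos

lemma even_onesCount_of_per [NeZero n] {c : Fin n} {f : Fin n → Bool} (h : Per c f)
    (he : Even (n / Nat.gcd c.val n)) : Even (onesCount f) := by
  have h1 := (h.gcd).val_mod (Nat.gcd_dvd_right c.val n) (gcd_pos c)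
  rw [onesCount_of_periodic h1 (Nat.gcd_dvd_right c.val n) (gcd_pos c)]
  exact he.mul_right _

lemma OF_card_eq_zero [NeZero n] {c : Fin n} (hpar : Even (n / Nat.gcd c.val n)) :
    Fintype.card (OF c) = 0 := by
  rw [Fintype.card_eq_zero_iff]
  constructor
  rintro ⟨f, hodd, hper⟩
  exact (Nat.not_even_iff_odd.mpr hodd) (even_onesCount_of_per hper hpar)

lemma OF_card_le_EF_card [NeZero n] (c : Fin n) :
    Fintype.card (OF c) ≤ Fintype.card (EF c) := by
  by_cases hpar : Even (n / Nat.gcd c.val n)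
  · rw [OF_card_eq_zero hpar]
    omega
  · have hodd : Odd (n / Nat.gcd c.val n) := Nat.not_even_iff_odd.mp hpar
    set g := Nat.gcd c.val n with hgdef
    have hgd : g ∣ n := Nat.gcd_dvd_right c.val n
    have hg0 : 0 < g := gcd_pos c
    refine Fintype.card_le_of_injective
      (fun f => ⟨flip g f.1, ?_, by rw [hgdef]; exact flip_per f.2.2⟩) ?_
    · have := onesCount_flip_parity hgd hg0 f.1
      obtain ⟨a, ha⟩ := f.2.1
      obtain ⟨b, hb⟩ := hodd
      refine ⟨(onesCount (flip g f.1)) / 2, ?_⟩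
      omega
    · intro x y hxy
      have h1 : flip g x.1 = flip g y.1 := congrArg Subtype.val hxy
      have h2 : x.1 = y.1 := by
        have := congrArg (flip g) h1
        rwa [flip_flip, flip_flip] at this
      exact Subtype.ext h2

lemma two_le_EF_card [NeZero n] (hne : Even n) (c : Fin n) :
    2 ≤ Fintype.card (EF c) := by
  have h0 : Even (onesCount (fun _ : Fin n => false)) := by
    unfold onesCount
    simp
  have h1 : onesCount (fun _ : Fin n => true) = n := by
    unfold onesCount
    simp
  have : Nontrivial (EF c) := by
    refine ⟨⟨⟨fun _ => false, h0, fun i => rfl⟩, ⟨fun _ => true, by rw [h1]; exact hne, fun i => rfl⟩, ?_⟩⟩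
    intro h
    have := congrFun (congrArg Subtype.val h) ⟨0, npos⟩
    simp at this
  exact Fintype.one_lt_card_iff_nontrivial.mpr this

lemma pow_le_EF_half [NeZero n] (hne : Even n) (h4 : 4 ≤ n) :
    2 ^ (n / 2) ≤ Fintype.card (EF ((n / 2 : ℕ) : Fin n)) := by
  set d : ℕ := n / 2 with hd
  have hd0 : 0 < d := by omega
  have hdn : d < n := by omega
  have hdvd : d ∣ n := by
    obtain ⟨t, ht⟩ := hne
    exact ⟨2, by omega⟩
  have hnd : n / d = 2 := by
    obtain ⟨t, ht⟩ := hne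
    have : n = d * 2 := by omega
    rw [this, Nat.mul_div_cancel_left _ hd0]
  set ψ : (Fin d → Bool) → (Fin n → Bool) :=
    fun h => fun i => h ⟨i.val % d, Nat.mod_lt _ hd0⟩ with hψ
  have hmod : ∀ (h : Fin d → Bool) (i : Fin n), ψ h i = ψ h ((i.val % d : ℕ) : Fin n) := by
    intro h i
    rw [hψ]
    simp only
    congr 1
    apply Fin.ext
    simp only [Fin.val_natCast]
    rw [Nat.mod_mod_of_dvd _ hdvd, Nat.mod_mod_of_dvd _ (dvd_refl d)]
  have heven : ∀ h : Fin d → Bool, Even (onesCount (ψ h)) := by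
    intro h
    rw [onesCount_of_periodic (hmod h) hdvd hd0, hnd]
    exact even_two_mul _
  have hper : ∀ h : Fin d → Bool, Per ((d : ℕ) : Fin n) (ψ h) := by
    intro h i
    rw [hψ]
    simp only
    congr 1
    apply Fin.ext
    simp only [Fin.val_add, Fin.val_natCast]
    rw [Nat.mod_eq_of_lt hdn, Nat.mod_mod_of_dvd _ hdvd, Nat.add_mod_right]
  have hinj : Function.Injective (fun h : (Fin d → Bool) => (⟨ψ h, heven h, hper h⟩ : EF ((d:ℕ) : Fin n))) := by
    intro x y hxy
    funext r
    have h1 : ψ x = ψ y := congrArg Subtype.val hxy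
    have := congrFun h1 ⟨r.val, lt_of_lt_of_le r.isLt (le_of_lt hdn)⟩
    rw [hψ] at this
    simp only [Nat.mod_eq_of_lt r.isLt] at this
    convert this
  calc 2 ^ d = Fintype.card (Fin d → Bool) := by simp
    _ ≤ _ := Fintype.card_le_of_injective _ hinj

section Action

variable (n) [NeZero n]

abbrev G := Multiplicative (Fin n)

instance rotSMul : SMul (G n) (Fin n → Bool) := ⟨fun k f => fun i => f (i + k.toAdd)⟩

lemma smul_def (k : G n) (f : Fin n → Bool) (i : Fin n) : (k • f) i = f (i + k.toAdd) := rfl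

instance rotAction : MulAction (G n) (Fin n → Bool) where
  one_smul f := by
    funext i
    rw [smul_def]
    simp
  mul_smul k l f := by
    funext i
    rw [smul_def, smul_def, smul_def, toAdd_mul, ← add_assoc]

lemma onesCount_smul (k : G n) (f : Fin n → Bool) : onesCount (k • f) = onesCount f :=
  onesCount_comp_add f k.toAdd

instance evSMul : SMul (G n) {f : Fin n → Bool // Even (onesCount f)} :=
  ⟨fun k f => ⟨k • f.1, by rw [onesCount_smul]; exact f.2⟩⟩

instance evAction : MulAction (G n) {f : Fin n → Bool // Even (onesCount f)} where
  one_smul f := Subtype.ext (one_smul _ f.1)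
  mul_smul k l f := Subtype.ext (mul_smul k l f.1)

instance odSMul : SMul (G n) {f : Fin n → Bool // Odd (onesCount f)} :=
  ⟨fun k f => ⟨k • f.1, by rw [onesCount_smul]; exact f.2⟩⟩

instance odAction : MulAction (G n) {f : Fin n → Bool // Odd (onesCount f)} where
  one_smul f := Subtype.ext (one_smul _ f.1)
  mul_smul k l f := Subtype.ext (mul_smul k l f.1)

lemma smul_fun_def (k : G n) (f : {f : Fin n → Bool // Even (onesCount f)}) :
    (k • f).1 = k • f.1 := rfl

lemma smul_fun_def' (k : G n) (f : {f : Fin n → Bool // Odd (onesCount f)}) :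
    (k • f).1 = k • f.1 := rfl

lemma necklaceRel_iff_exists_smul (a b : Fin n → Bool) :
    necklaceRel n a b ↔ ∃ g : G n, g • b = a := by
  constructor
  · rintro ⟨k, rfl⟩
    refine ⟨Multiplicative.ofAdd (-(k : Fin n)), ?_⟩
    funext i
    rw [smul_def]
    simp only [toAdd_ofAdd, Function.comp_apply, finRotate_pow_apply]
    congr 1
    abel
  · rintro ⟨g, rfl⟩
    refine ⟨(-g.toAdd).val, ?_⟩
    funext i
    simp only [Function.comp_apply, finRotate_pow_apply, smul_def, Fin.cast_val_eq_self]
    congr 1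
    abel

lemma relEven_iff_orbitRel (a b : {f : Fin n → Bool // Even (onesCount f)}) :
    necklaceRelEven n a b ↔ (MulAction.orbitRel (G n) _) a b := by
  rw [MulAction.orbitRel_apply, MulAction.mem_orbit_iff]
  unfold necklaceRelEven
  rw [necklaceRel_iff_exists_smul]
  constructor
  · rintro ⟨g, hg⟩
    exact ⟨g, Subtype.ext (by rw [smul_fun_def, hg])⟩
  · rintro ⟨g, hg⟩
    exact ⟨g, by rw [← smul_fun_def, hg]⟩

lemma relOdd_iff_orbitRel (a b : {f : Fin n → Bool // Odd (onesCount f)}) :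
    necklaceRelOdd n a b ↔ (MulAction.orbitRel (G n) _) a b := by
  rw [MulAction.orbitRel_apply, MulAction.mem_orbit_iff]
  unfold necklaceRelOdd
  rw [necklaceRel_iff_exists_smul]
  constructor
  · rintro ⟨g, hg⟩
    exact ⟨g, Subtype.ext (by rw [smul_fun_def', hg])⟩
  · rintro ⟨g, hg⟩
    exact ⟨g, by rw [← smul_fun_def', hg]⟩

def fixedEquivEF (g : G n) :
    (MulAction.fixedBy {f : Fin n → Bool // Even (onesCount f)} g) ≃ EF (g.toAdd) where
  toFun x := ⟨x.1.1, x.1.2, fun i => congrFun (congrArg Subtype.val x.2) i⟩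
  invFun f := ⟨⟨f.1, f.2.1⟩, Subtype.ext (funext f.2.2)⟩
  left_inv _ := rfl
  right_inv _ := rfl

def fixedEquivOF (g : G n) :
    (MulAction.fixedBy {f : Fin n → Bool // Odd (onesCount f)} g) ≃ OF (g.toAdd) where
  toFun x := ⟨x.1.1, x.1.2, fun i => congrFun (congrArg Subtype.val x.2) i⟩
  invFun f := ⟨⟨f.1, f.2.1⟩, Subtype.ext (funext f.2.2)⟩
  left_inv _ := rfl
  right_inv _ := rfl

lemma burnside_even :
    ∑ c : Fin n, Fintype.card (EF c) = Nat.card (Quot (necklaceRelEven n)) * n := by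
  classical
  letI : ∀ a : G n, Fintype (MulAction.fixedBy {f : Fin n → Bool // Even (onesCount f)} a) :=
    fun a => Fintype.ofFinite _
  letI : Fintype (Quotient (MulAction.orbitRel (G n) {f : Fin n → Bool // Even (onesCount f)})) :=
    Fintype.ofFinite _
  have hB := MulAction.sum_card_fixedBy_eq_card_orbits_mul_card_group (G n)
    {f : Fin n → Bool // Even (onesCount f)}
  have hL : ∑ a : G n, Fintype.card (MulAction.fixedBy {f : Fin n → Bool // Even (onesCount f)} a)
      = ∑ c : Fin n, Fintype.card (EF c) := by
    rw [← Equiv.sum_comp (Multiplicative.ofAdd (α := Fin n))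
      (fun a => Fintype.card (MulAction.fixedBy {f : Fin n → Bool // Even (onesCount f)} a))]
    apply Finset.sum_congr rfl
    intro c _
    exact Fintype.card_congr (fixedEquivEF n (Multiplicative.ofAdd c))
  have hG : Fintype.card (G n) = n := by
    rw [Fintype.card_congr (Multiplicative.toAdd (α := Fin n)), Fintype.card_fin]
  have hQ : Fintype.card (Quotient (MulAction.orbitRel (G n) {f : Fin n → Bool // Even (onesCount f)}))
      = Nat.card (Quot (necklaceRelEven n)) := by
    rw [← Nat.card_eq_fintype_card]
    exact (Nat.card_congr (Quot.congrRight (relEven_iff_orbitRel n) :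
      Quot (necklaceRelEven n) ≃ Quotient (MulAction.orbitRel (G n) _))).symm
  rw [hL, hG, hQ] at hB
  exact hB

lemma burnside_odd :
    ∑ c : Fin n, Fintype.card (OF c) = Nat.card (Quot (necklaceRelOdd n)) * n := by
  classical
  letI : ∀ a : G n, Fintype (MulAction.fixedBy {f : Fin n → Bool // Odd (onesCount f)} a) :=
    fun a => Fintype.ofFinite _
  letI : Fintype (Quotient (MulAction.orbitRel (G n) {f : Fin n → Bool // Odd (onesCount f)})) :=
    Fintype.ofFinite _
  have hB := MulAction.sum_card_fixedBy_eq_card_orbits_mul_card_group (G n)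
    {f : Fin n → Bool // Odd (onesCount f)}
  have hL : ∑ a : G n, Fintype.card (MulAction.fixedBy {f : Fin n → Bool // Odd (onesCount f)} a)
      = ∑ c : Fin n, Fintype.card (OF c) := by
    rw [← Equiv.sum_comp (Multiplicative.ofAdd (α := Fin n))
      (fun a => Fintype.card (MulAction.fixedBy {f : Fin n → Bool // Odd (onesCount f)} a))]
    apply Finset.sum_congr rfl
    intro c _
    exact Fintype.card_congr (fixedEquivOF n (Multiplicative.ofAdd c))
  have hG : Fintype.card (G n) = n := by
    rw [Fintype.card_congr (Multiplicative.toAdd (α := Fin n)), Fintype.card_fin]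
  have hQ : Fintype.card (Quotient (MulAction.orbitRel (G n) {f : Fin n → Bool // Odd (onesCount f)}))
      = Nat.card (Quot (necklaceRelOdd n)) := by
    rw [← Nat.card_eq_fintype_card]
    exact (Nat.card_congr (Quot.congrRight (relOdd_iff_orbitRel n) :
      Quot (necklaceRelOdd n) ≃ Quotient (MulAction.orbitRel (G n) _))).symm
  rw [hL, hG, hQ] at hB
  exact hB

end Action

lemma two_pow_ge {m : ℕ} (h : 2 ≤ m) : 2 * m ≤ 2 ^ m := by
  induction m with
  | zero => omega
  | succ m ih =>
      rcases Nat.lt_or_ge m 2 with hm | hm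
      · interval_cases m <;> simp_all <;> omega
      · have := ih hm
        have h2 : 2 ≤ 2 ^ m := Nat.one_lt_two_pow_iff.mpr (by omega)
        rw [pow_succ]
        omega

lemma two_pow_ge' {m : ℕ} (h : 3 ≤ m) : 2 * m + 2 ≤ 2 ^ m := by
  induction m with
  | zero => omega
  | succ m ih =>
      rcases Nat.lt_or_ge m 3 with hm | hm
      · interval_cases m <;> simp_all <;> omega
      · have := ih hm
        have h2 : 2 ≤ 2 ^ m := Nat.one_lt_two_pow_iff.mpr (by omega)
        rw [pow_succ]
        omega

end NecklaceAux

theorem even_necklaces_exceed_odd (n : ℕ) (hn : 4 ≤ n) (he : Even n) :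
    Nat.card (Quot (necklaceRelOdd n)) < Nat.card (Quot (necklaceRelEven n)) ∧
    1 < Nat.card (Quot (necklaceRelEven n)) - Nat.card (Quot (necklaceRelOdd n)) := by
  classical
  open NecklaceAux in
  haveI : NeZero n := ⟨by omega⟩
  have hmod2 : n % 2 = 0 := Nat.even_iff.mp he
  set E := Nat.card (Quot (necklaceRelEven n)) with hE
  set O := Nat.card (Quot (necklaceRelOdd n)) with hO
  have hBE : ∑ c : Fin n, Fintype.card (EF c) = E * n := burnside_even n
  have hBO : ∑ c : Fin n, Fintype.card (OF c) = O * n := burnside_odd n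
  set hhalf : Fin n := ((n / 2 : ℕ) : Fin n) with hhalfdef
  have hhalfval : hhalf.val = n / 2 := by
    rw [hhalfdef, Fin.val_natCast]
    exact Nat.mod_eq_of_lt (by omega)
  set Img : Finset (Fin n) := (Finset.range (n/2)).image (fun t => ((2*t+1 : ℕ) : Fin n)) with hImg
  have hImgval : ∀ c ∈ Img, ∃ t, t < n/2 ∧ c.val = 2*t+1 := by
    intro c hc
    rw [hImg, Finset.mem_image] at hc
    obtain ⟨t, ht, rfl⟩ := hc
    rw [Finset.mem_range] at ht
    refine ⟨t, ht, ?_⟩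
    rw [Fin.val_natCast]
    exact Nat.mod_eq_of_lt (by omega)
  have hImgcard : Img.card = n / 2 := by
    rw [hImg, Finset.card_image_of_injOn, Finset.card_range]
    intro a ha b hb hab
    simp only [Finset.mem_coe, Finset.mem_range] at ha hb
    have h1 := congrArg Fin.val hab
    simp only [Fin.val_natCast] at h1
    rw [Nat.mod_eq_of_lt (by omega), Nat.mod_eq_of_lt (by omega)] at h1
    omega
  set T : Finset (Fin n) := insert hhalf Img with hT
  -- odd counts vanish on T
  have hOT : ∀ c ∈ T, Fintype.card (OF c) = 0 := by
    intro c hc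
    rw [hT, Finset.mem_insert] at hc
    apply OF_card_eq_zero
    rcases hc with rfl | hc
    · rw [hhalfval]
      have hdvd : n/2 ∣ n := ⟨2, by omega⟩
      rw [Nat.gcd_eq_left hdvd]
      set k := n / 2 with hk
      have h2 : n = k * 2 := by omega
      rw [h2, Nat.mul_div_cancel_left _ (by omega : 0 < k)]
      exact even_two
    · obtain ⟨t, ht, hval⟩ := hImgval c hc
      set g := Nat.gcd c.val n with hg
      have hgodd : Odd g := by
        rcases Nat.even_or_odd g with hg2 | hg2
        · exfalso
          have h1 : (2 : ℕ) ∣ g := hg2.two_dvd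
          have h2 : (2 : ℕ) ∣ c.val := h1.trans (Nat.gcd_dvd_left _ _)
          omega
        · exact hg2
      have hgdvd : g ∣ n := Nat.gcd_dvd_right _ _
      obtain ⟨q, hq⟩ := hgdvd
      rw [hq, Nat.mul_div_cancel_left _ (gcd_pos c)]
      by_contra hqe
      have hqodd : Odd q := Nat.not_even_iff_odd.mp hqe
      have hodd : Odd n := hq ▸ hgodd.mul hqodd
      exact (Nat.not_even_iff_odd.mpr hodd) he
  have hsplitE : ∑ c : Fin n, Fintype.card (EF c)
      = ∑ c ∈ T, Fintype.card (EF c) + ∑ c ∈ Finset.univ \ T, Fintype.card (EF c) := by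
    rw [← Finset.sum_union (Finset.disjoint_sdiff)]
    congr 1
    rw [Finset.union_sdiff_of_subset (Finset.subset_univ T)]
  have hsplitO : ∑ c : Fin n, Fintype.card (OF c)
      = ∑ c ∈ Finset.univ \ T, Fintype.card (OF c) := by
    have h1 : ∑ c : Fin n, Fintype.card (OF c)
        = ∑ c ∈ T, Fintype.card (OF c) + ∑ c ∈ Finset.univ \ T, Fintype.card (OF c) := by
      rw [← Finset.sum_union (Finset.disjoint_sdiff)]
      congr 1
      rw [Finset.union_sdiff_of_subset (Finset.subset_univ T)]
    rw [h1, Finset.sum_eq_zero hOT, zero_add]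
  -- lower bound for the sum over T
  have hTE : 2 * n ≤ ∑ c ∈ T, Fintype.card (EF c) := by
    have hhl : 2 ^ (n/2) ≤ Fintype.card (EF hhalf) := by
      rw [hhalfdef]
      exact pow_le_EF_half he hn
    by_cases hmem : hhalf ∈ Img
    · have hTI : T = Img := by rw [hT, Finset.insert_eq_self.mpr hmem]
      obtain ⟨t, ht, hv⟩ := hImgval hhalf hmem
      rw [hhalfval] at hv
      have hm3 : 3 ≤ n / 2 := by omega
      have hsum : Fintype.card (EF hhalf) + ∑ c ∈ Img.erase hhalf, Fintype.card (EF c)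
          = ∑ c ∈ Img, Fintype.card (EF c) :=
        Finset.add_sum_erase Img (fun c => Fintype.card (EF c)) hmem
      have herase : 2 * (n/2 - 1) ≤ ∑ c ∈ Img.erase hhalf, Fintype.card (EF c) := by
        have hcard : (Img.erase hhalf).card = n/2 - 1 := by
          rw [Finset.card_erase_of_mem hmem, hImgcard]
        have h := Finset.card_nsmul_le_sum (Img.erase hhalf)
          (fun c => Fintype.card (EF c)) 2 (fun c _ => two_le_EF_card he c)
        rw [smul_eq_mul, hcard] at h
        omega
      rw [hTI]
      have h2p : 2*(n/2) + 2 ≤ 2^(n/2) := two_pow_ge' hm3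
      omega
    · rw [hT, Finset.sum_insert hmem]
      have hImgsum : 2 * (n/2) ≤ ∑ c ∈ Img, Fintype.card (EF c) := by
        have h := Finset.card_nsmul_le_sum Img
          (fun c => Fintype.card (EF c)) 2 (fun c _ => two_le_EF_card he c)
        rw [smul_eq_mul, hImgcard] at h
        omega
      have h2p : n ≤ 2 ^ (n/2) := by
        have := two_pow_ge (by omega : 2 ≤ n/2)
        omega
      omega
  -- put everything together
  have hsd : ∑ c ∈ Finset.univ \ T, Fintype.card (OF c)
      ≤ ∑ c ∈ Finset.univ \ T, Fintype.card (EF c) :=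
    Finset.sum_le_sum (fun c _ => OF_card_le_EF_card c)
  have hfinal : 2 * n + O * n ≤ E * n := by
    rw [← hBE, ← hBO, hsplitE, hsplitO]
    omega
  have hEO : O + 2 ≤ E := by
    have h1 : (O + 2) * n ≤ E * n := by nlinarith
    exact Nat.le_of_mul_le_mul_right h1 (by omega)
  exact ⟨by omega, by omega⟩
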